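/- Lemma A.2 (modified bistable forcing): Let 0 < θ ≤ Θ and let W : ℝ → ℝ be C³ satisfying the double-well assumptions on [-1,1]. Fix μ ∈ (0, 1/8) such that W''(u) ∈ [W''(−1)/2, 3W''(−1)/2] for u ∈ [−1−2μ, −1+2μ], W''(u) ∈ [W''(1)/2, 3W''(1)/2] for u ∈ [1−2μ, 1], and W''(u) ∈ [3W''(0)/2, W''(0)/2] for u ∈ [−μ, μ]. Define f̄ : [−1−μ, 1] → ℝ by f̄(u) = Θ⁻¹W'(u) for u ∈ [0,1] ∪ [−1−μ, −1] and f̄(u) = θ⁻¹W'(u) for u ∈ [−1, 0], and set M = θ⁻¹ sup_{u ∈ [−2,2]} |W''(u)|. Then there exist positive constants c, M₂, ε₁ such that for every ε ∈ (0, ε₁) there is a Lipschitz function f̃_ε : [−1−μ, 1] → ℝ with: (a) f̃_ε(u) ≥ f̄(u) for all u ∈ [−1−μ, 1]; (b) f̃_ε(u) ≤ −cε for all u ∈ [2ε|log ε|, 3ε|log ε|], and f̃_ε(u) ≥ cε for all u ∈ [−ε/M, 0]; (c) the Lipschitz constant of f̃_ε on [−1−μ, 1] is at most M₂. -/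

import Mathlib

open Set Filter Topology

noncomputable section

def DoubleWell (W : ℝ → ℝ) : Prop :=
  ContDiff ℝ 3 W ∧
  (∀ u ∈ Set.Icc (-1:ℝ) 1, 0 ≤ W u) ∧
  W (-1) = 0 ∧ W 1 = 0 ∧
  (∀ u ∈ Set.Ioo (-1:ℝ) 1, 0 < W u) ∧
  deriv W (-1) = 0 ∧ deriv W 0 = 0 ∧ deriv W 1 = 0 ∧
  (∀ u ∈ Set.Ioo (-1:ℝ) 0, 0 < deriv W u) ∧
  (∀ u ∈ Set.Ioo (0:ℝ) 1, deriv W u < 0) ∧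
  0 < deriv (deriv W) (-1) ∧ 0 < deriv (deriv W) 1 ∧ deriv (deriv W) 0 < 0

set_option maxHeartbeats 4000000 in
/-- Lemma A.2: the modified bistable forcing. -/
theorem modified_bistable_forcing (θ Θ : ℝ) (hθ : 0 < θ) (hθΘ : θ ≤ Θ)
    (W : ℝ → ℝ) (hW : DoubleWell W) (μ : ℝ) (hμ : μ ∈ Set.Ioo (0:ℝ) (1/8))
    (hμ1 : ∀ u ∈ Set.Icc (-1 - 2*μ) (-1 + 2*μ),
      deriv (deriv W) u ∈ Set.Icc (deriv (deriv W) (-1) / 2) (3 * deriv (deriv W) (-1) / 2))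
    (hμ2 : ∀ u ∈ Set.Icc (1 - 2*μ) (1:ℝ),
      deriv (deriv W) u ∈ Set.Icc (deriv (deriv W) 1 / 2) (3 * deriv (deriv W) 1 / 2))
    (hμ3 : ∀ u ∈ Set.Icc (-μ) μ,
      deriv (deriv W) u ∈ Set.Icc (3 * deriv (deriv W) 0 / 2) (deriv (deriv W) 0 / 2))
    (fbar : ℝ → ℝ)
    (hfbar1 : ∀ u ∈ Set.Icc (0:ℝ) 1 ∪ Set.Icc (-1 - μ) (-1), fbar u = Θ⁻¹ * deriv W u)
    (hfbar2 : ∀ u ∈ Set.Icc (-1:ℝ) 0, fbar u = θ⁻¹ * deriv W u)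
    (M : ℝ) (hM : M = θ⁻¹ * ⨆ u : Set.Icc (-2:ℝ) 2, |deriv (deriv W) (u : ℝ)|) :
    ∃ c > 0, ∃ M₂ > 0, ∃ ε₁ > 0, ∀ ε : ℝ, 0 < ε → ε < ε₁ →
      ∃ ftil : ℝ → ℝ,
        (∀ u ∈ Set.Icc (-1 - μ) (1:ℝ), fbar u ≤ ftil u) ∧
        (∀ u ∈ Set.Icc (2 * ε * |Real.log ε|) (3 * ε * |Real.log ε|), ftil u ≤ -c * ε) ∧
        (∀ u ∈ Set.Icc (-ε / M) (0:ℝ), c * ε ≤ ftil u) ∧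
        (∀ u ∈ Set.Icc (-1 - μ) (1:ℝ), ∀ v ∈ Set.Icc (-1 - μ) (1:ℝ),
          |ftil u - ftil v| ≤ M₂ * |u - v|) := by
  obtain ⟨hC3, -, -, -, -, hd1, hd0, -, -, -, hdd1, -, hdd0⟩ := hW
  obtain ⟨hμ0, hμ8⟩ := hμ
  have hΘ : 0 < Θ := lt_of_lt_of_le hθ hθΘ
  -- smoothness facts
  have hC2 : ContDiff ℝ 2 (deriv W) := by
    have h' : ContDiff ℝ (2+1) W := by norm_num; exact hC3
    exact (contDiff_succ_iff_deriv.mp h').2.2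
  have hdiffW' : Differentiable ℝ (deriv W) := hC2.differentiable (by norm_num)
  have hcontW'' : Continuous (deriv (deriv W)) := by
    have h' : ContDiff ℝ (1+1) (deriv W) := by norm_num; exact hC2
    exact ((contDiff_succ_iff_deriv.mp h').2.2).continuous
  -- the sup
  obtain ⟨S, hS⟩ : ∃ S : ℝ, S = ⨆ u : Set.Icc (-2:ℝ) 2, |deriv (deriv W) (u : ℝ)| := ⟨_, rfl⟩
  rw [← hS] at hM
  obtain ⟨C, hC⟩ := (isCompact_Icc (a := (-2:ℝ)) (b := 2)).exists_bound_of_continuousOn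
    (hcontW''.continuousOn)
  have hbdd : BddAbove (Set.range fun u : Set.Icc (-2:ℝ) 2 => |deriv (deriv W) (u : ℝ)|) := by
    refine ⟨C, ?_⟩
    rintro x ⟨u, rfl⟩
    simpa using hC u u.2
  have hSle : ∀ x ∈ Set.Icc (-2:ℝ) 2, |deriv (deriv W) x| ≤ S :=
    fun x hx => hS ▸ le_ciSup hbdd ⟨x, hx⟩
  have hSpos : 0 < S := lt_of_lt_of_le (by simpa [abs_of_pos hdd1] using hdd1)
    (hSle (-1) (by norm_num))
  have hMpos : 0 < M := by rw [hM]; positivity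
  -- Lipschitz bound for deriv W on [-2,2]
  have lemW' : ∀ a ∈ Set.Icc (-2:ℝ) 2, ∀ b ∈ Set.Icc (-2:ℝ) 2,
      |deriv W a - deriv W b| ≤ S * |a - b| := by
    intro a ha b hb
    have := (convex_Icc (-2:ℝ) 2).norm_image_sub_le_of_norm_deriv_le
      (f := deriv W) (fun x _ => hdiffW'.differentiableAt)
      (fun x hx => by simpa using hSle x hx) hb ha
    simpa [Real.norm_eq_abs] using this
  -- comparison of deriv W with linear function near 0
  have hanti : AntitoneOn (fun s => deriv W s - deriv (deriv W) 0 / 2 * s)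
      (Set.Icc (-μ) μ) := by
    apply antitoneOn_of_deriv_nonpos (convex_Icc _ _)
    · exact (hdiffW'.continuous.continuousOn.sub (by fun_prop))
    · apply DifferentiableOn.sub
      · exact hdiffW'.differentiableOn
      · fun_prop
    · intro x hx
      rw [interior_Icc] at hx
      have hx' : x ∈ Set.Icc (-μ) μ := Ioo_subset_Icc_self hx
      have h2 : HasDerivAt (fun s : ℝ => deriv (deriv W) 0 / 2 * s)
          (deriv (deriv W) 0 / 2) x := by
        simpa using (hasDerivAt_id x).const_mul (deriv (deriv W) 0 / 2)
      have hder := ((hdiffW'.differentiableAt.hasDerivAt).sub h2).deriv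
      rw [show (fun s => deriv W s - deriv (deriv W) 0 / 2 * s) = (deriv W - fun s => deriv (deriv W) 0 / 2 * s) from rfl, hder]
      have := (hμ3 x hx').2
      linarith
  have hcmp_pos : ∀ u ∈ Set.Icc (0:ℝ) μ, deriv W u ≤ deriv (deriv W) 0 / 2 * u := by
    intro u hu
    have h0 : (0:ℝ) ∈ Set.Icc (-μ) μ := by constructor <;> linarith [hu.1]
    have hu' : u ∈ Set.Icc (-μ) μ := by constructor <;> [linarith [hu.1]; exact hu.2]
    have := hanti h0 hu' hu.1
    simp only [mul_zero, sub_zero] at this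
    rw [hd0] at this
    linarith
  have hcmp_neg : ∀ u ∈ Set.Icc (-μ) (0:ℝ), deriv (deriv W) 0 / 2 * u ≤ deriv W u := by
    intro u hu
    have h0 : (0:ℝ) ∈ Set.Icc (-μ) μ := by constructor <;> linarith
    have hu' : u ∈ Set.Icc (-μ) μ := by constructor <;> [exact hu.1; linarith [hu.2]]
    have := hanti hu' h0 hu.2
    simp only [mul_zero, sub_zero] at this
    rw [hd0] at this
    linarith
  -- constants
  obtain ⟨c, hc⟩ : ∃ c : ℝ, c = Θ⁻¹ * (-(deriv (deriv W) 0)) := ⟨_, rfl⟩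
  have hcpos : 0 < c := by
    rw [hc]
    have : 0 < -(deriv (deriv W) 0) := by linarith
    positivity
  refine ⟨c, hcpos, M + c, by positivity, min (Real.exp (-1)) (min ((μ/6)^2) (M*μ)),
    by positivity, ?_⟩
  intro ε hε hε₁
  have hεe : ε < Real.exp (-1) := lt_of_lt_of_le hε₁ (min_le_left _ _)
  have hεμ2 : ε < (μ/6)^2 := lt_of_lt_of_le hε₁ (le_trans (min_le_right _ _) (min_le_left _ _))
  have hεMμ : ε < M*μ := lt_of_lt_of_le hε₁ (le_trans (min_le_right _ _) (min_le_right _ _))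
  have hε1 : ε < 1 := lt_trans hεe (by
    calc Real.exp (-1) < Real.exp 0 := Real.exp_lt_exp.mpr (by norm_num)
    _ = 1 := Real.exp_zero)
  have hlogneg : Real.log ε < 0 := Real.log_neg hε hε1
  have habslog : |Real.log ε| = -Real.log ε := abs_of_neg hlogneg
  have hlog1 : 1 ≤ |Real.log ε| := by
    rw [habslog]
    have h2 : Real.log ε ≤ -1 := (Real.log_le_iff_le_exp hε).mpr (le_of_lt hεe)
    linarith
  obtain ⟨L, hL⟩ : ∃ L : ℝ, L = ε * |Real.log ε| := ⟨_, rfl⟩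
  have hLpos : 0 < L := hL ▸ mul_pos hε (by linarith)
  -- bound: 3 L ≤ μ
  have hsq : Real.sqrt ε < μ/6 := by
    have := Real.sqrt_lt_sqrt (le_of_lt hε) hεμ2
    rwa [Real.sqrt_sq (by positivity)] at this
  have hsqpos : 0 < Real.sqrt ε := Real.sqrt_pos.mpr hε
  have hεsq : Real.sqrt ε * Real.sqrt ε = ε := Real.mul_self_sqrt (le_of_lt hε)
  have hloglt : -Real.log ε ≤ 2 / Real.sqrt ε := by
    have h1 : Real.log ε = 2 * Real.log (Real.sqrt ε) := by
      rw [Real.log_sqrt (le_of_lt hε)]; ring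
    have h2 : -Real.log (Real.sqrt ε) ≤ 1 / Real.sqrt ε := by
      have := Real.add_one_le_exp (-Real.log (Real.sqrt ε))
      have h3 : Real.exp (-Real.log (Real.sqrt ε)) = 1 / Real.sqrt ε := by
        rw [Real.exp_neg, Real.exp_log hsqpos]; ring
      rw [h3] at this
      linarith
    rw [h1]
    rw [div_eq_mul_inv, div_eq_mul_inv] at *
    linarith
  have h3L : 3 * L < μ := by
    have : L ≤ 2 * Real.sqrt ε := by
      rw [hL, habslog]
      calc ε * -Real.log ε ≤ ε * (2 / Real.sqrt ε) := by
            apply mul_le_mul_of_nonneg_left hloglt (le_of_lt hε)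
        _ = 2 * Real.sqrt ε := by
            field_simp
            nlinarith [hεsq]
    nlinarith
  -- define ftil
  obtain ⟨φ, hφ⟩ : ∃ φ : ℝ → ℝ, φ = fun u => c / |Real.log ε| * max 0 (min L (L - u)) :=
    ⟨_, rfl⟩
  have hφ_nonneg : ∀ u, 0 ≤ φ u := by
    intro u
    simp only [hφ]
    exact mul_nonneg (div_nonneg hcpos.le (abs_nonneg _)) (le_max_left _ _)
  have hφ_le : ∀ u, φ u ≤ c * ε := by
    intro u
    simp only [hφ]
    have h1 : max 0 (min L (L - u)) ≤ L := by
      apply max_le (le_of_lt hLpos) (min_le_left _ _)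
    calc c / |Real.log ε| * max 0 (min L (L - u)) ≤ c / |Real.log ε| * L :=
          mul_le_mul_of_nonneg_left h1 (div_nonneg hcpos.le (abs_nonneg _))
      _ = c * ε := by
          rw [hL]; field_simp
  have hφ_neg : ∀ u ≤ (0:ℝ), φ u = c * ε := by
    intro u hu
    have : min L (L - u) = L := min_eq_left (by linarith)
    simp only [hφ, this, max_eq_right (le_of_lt hLpos)]
    rw [hL]; field_simp
  have hφ_far : ∀ u, 2 * L ≤ u → φ u = 0 := by
    intro u hu
    have : max 0 (min L (L - u)) = 0 := by
      apply max_eq_left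
      apply le_trans (min_le_right _ _)
      linarith
    simp only [hφ, this, mul_zero]
  have hφ_lip : ∀ u v : ℝ, |φ u - φ v| ≤ c * |u - v| := by
    intro u v
    have hmax : ∀ a b : ℝ, |max 0 a - max 0 b| ≤ |a - b| := by
      intro a b
      rw [max_comm 0 a, max_comm 0 b]
      exact abs_max_sub_max_le_abs a b 0
    have hmin : ∀ a b : ℝ, |min L a - min L b| ≤ |a - b| := by
      intro a b
      have h4 : ∀ x : ℝ, min L x = -max (-x) (-L) := by
        intro x; rw [← min_neg_neg, neg_neg, neg_neg, min_comm]
      rw [h4 a, h4 b]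
      have := abs_max_sub_max_le_abs (-a) (-b) (-L)
      calc |(-max (-a) (-L)) - -max (-b) (-L)| = |max (-a) (-L) - max (-b) (-L)| := by
            rw [show (-max (-a) (-L)) - -max (-b) (-L) = -(max (-a) (-L) - max (-b) (-L)) by ring,
              abs_neg]
        _ ≤ |(-a) - -b| := this
        _ = |a - b| := by rw [show (-a) - -b = -(a-b) by ring, abs_neg]
    have h1 : |max 0 (min L (L - u)) - max 0 (min L (L - v))| ≤ |u - v| := by
      calc _ ≤ |min L (L - u) - min L (L - v)| := hmax _ _
        _ ≤ |(L - u) - (L - v)| := hmin _ _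
        _ = |u - v| := by rw [show (L - u) - (L - v) = -(u - v) by ring, abs_neg]
    have hq : 0 ≤ c / |Real.log ε| := div_nonneg hcpos.le (abs_nonneg _)
    have hcl : c / |Real.log ε| ≤ c := by
      rw [div_le_iff₀ (by linarith)]
      nlinarith [hcpos, hlog1]
    calc |φ u - φ v| = c / |Real.log ε| * |max 0 (min L (L - u)) - max 0 (min L (L - v))| := by
          simp only [hφ]; rw [← mul_sub, abs_mul, abs_of_nonneg hq]
      _ ≤ c / |Real.log ε| * |u - v| := mul_le_mul_of_nonneg_left h1 hq
      _ ≤ c * |u - v| := mul_le_mul_of_nonneg_right hcl (abs_nonneg _)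
  refine ⟨fun u => fbar u + φ u, ?_, ?_, ?_, ?_⟩
  · intro u _
    have := hφ_nonneg u
    show fbar u ≤ fbar u + φ u
    linarith
  · -- on [2L, 3L]
    intro u hu
    show fbar u + φ u ≤ -c * ε
    have hu1 : 2 * L ≤ u := by
      have := hu.1; rw [hL]; linarith [hu.1]
    have hu2 : u ≤ 3 * L := by
      have := hu.2; rw [hL]; linarith [hu.2]
    have huμ : u ≤ μ := by linarith
    have hu0 : 0 ≤ u := by linarith [hLpos]
    have hfu : fbar u = Θ⁻¹ * deriv W u :=
      hfbar1 u (Or.inl ⟨hu0, by linarith⟩)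
    have hWu : deriv W u ≤ deriv (deriv W) 0 / 2 * u := hcmp_pos u ⟨hu0, huμ⟩
    rw [hφ_far u hu1, add_zero, hfu]
    have hkey : deriv (deriv W) 0 / 2 * u ≤ deriv (deriv W) 0 * ε := by
      have h2L : 2 * ε ≤ 2 * L := by
        rw [hL]; nlinarith
      nlinarith [hdd0]
    have : Θ⁻¹ * deriv W u ≤ Θ⁻¹ * (deriv (deriv W) 0 * ε) := by
      apply mul_le_mul_of_nonneg_left (le_trans hWu hkey) (by positivity)
    calc Θ⁻¹ * deriv W u ≤ Θ⁻¹ * (deriv (deriv W) 0 * ε) := this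
      _ = -c * ε := by rw [hc]; ring
  · -- on [-ε/M, 0]
    intro u hu
    show c * ε ≤ fbar u + φ u
    have huM : -ε/M ≤ u := hu.1
    have hu0 : u ≤ 0 := hu.2
    have hεM : ε / M < μ := by
      rw [div_lt_iff₀ hMpos]; nlinarith
    have huμ : -μ ≤ u := by
      have : -(ε/M) ≤ u := by rwa [neg_div] at huM
      linarith
    have hfu : fbar u = θ⁻¹ * deriv W u := hfbar2 u ⟨by linarith, hu0⟩
    have hWu : deriv (deriv W) 0 / 2 * u ≤ deriv W u := hcmp_neg u ⟨huμ, hu0⟩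
    have hWu0 : 0 ≤ deriv W u := le_trans (by nlinarith) hWu
    rw [hφ_neg u hu0, hfu]
    have : 0 ≤ θ⁻¹ * deriv W u := by positivity
    linarith
  · -- Lipschitz
    intro u hu v hv
    show |fbar u + φ u - (fbar v + φ v)| ≤ (M + c) * |u - v|
    have key : ∀ a ∈ Set.Icc (-1-μ) (1:ℝ), ∀ b ∈ Set.Icc (-1-μ) (1:ℝ), a ≤ b →
        |fbar a - fbar b| ≤ M * |a - b| := by
      intro a ha b hb hab
      have ha2 : a ∈ Set.Icc (-2:ℝ) 2 := ⟨by linarith [ha.1], by linarith [ha.2]⟩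
      have hb2 : b ∈ Set.Icc (-2:ℝ) 2 := ⟨by linarith [hb.1], by linarith [hb.2]⟩
      have hm1 : (-1:ℝ) ∈ Set.Icc (-2:ℝ) 2 := by norm_num
      have h0 : (0:ℝ) ∈ Set.Icc (-2:ℝ) 2 := by norm_num
      have hθS : θ⁻¹ * S = M := hM.symm
      have hΘθ : Θ⁻¹ ≤ θ⁻¹ := by
        apply inv_anti₀ hθ hθΘ
      have hΘ0 : (0:ℝ) ≤ Θ⁻¹ := by positivity
      have hθ0 : (0:ℝ) ≤ θ⁻¹ := by positivity
      rcases le_or_gt b (-1) with hbm | hbm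
      · -- both in A
        have hfa : fbar a = Θ⁻¹ * deriv W a := hfbar1 a (Or.inr ⟨ha.1, by linarith⟩)
        have hfb : fbar b = Θ⁻¹ * deriv W b := hfbar1 b (Or.inr ⟨hb.1, hbm⟩)
        rw [hfa, hfb, ← mul_sub, abs_mul, abs_of_nonneg hΘ0]
        calc Θ⁻¹ * |deriv W a - deriv W b| ≤ θ⁻¹ * (S * |a - b|) := by
              have := lemW' a ha2 b hb2
              have h1 : Θ⁻¹ * |deriv W a - deriv W b| ≤ θ⁻¹ * |deriv W a - deriv W b| :=
                mul_le_mul_of_nonneg_right hΘθ (abs_nonneg _)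
              have h2 : θ⁻¹ * |deriv W a - deriv W b| ≤ θ⁻¹ * (S * |a - b|) :=
                mul_le_mul_of_nonneg_left this hθ0
              linarith
          _ = M * |a - b| := by rw [← hθS]; ring
      rcases le_or_gt a 0 with ha0 | ha0
      · rcases le_or_gt a (-1) with ham | ham
        · -- a in A, b in B or C
          have hfa : fbar a = Θ⁻¹ * deriv W a := hfbar1 a (Or.inr ⟨ha.1, ham⟩)
          have habs_a : |fbar a| ≤ M * (-1 - a) := by
            rw [hfa]
            have := lemW' a ha2 (-1) hm1
            rw [hd1, sub_zero] at this
            have h1 : |Θ⁻¹ * deriv W a| = Θ⁻¹ * |deriv W a| := by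
              rw [abs_mul, abs_of_nonneg hΘ0]
            rw [h1]
            have h2 : |a - (-1)| = -1 - a := by
              rw [abs_of_nonpos (by linarith)]; ring
            rw [h2] at this
            calc Θ⁻¹ * |deriv W a| ≤ θ⁻¹ * (S * (-1 - a)) := by
                  nlinarith [abs_nonneg (deriv W a)]
              _ = M * (-1 - a) := by rw [← hθS]; ring
          rcases le_or_gt b 0 with hb0 | hb0
          · -- b in B
            have hfb : fbar b = θ⁻¹ * deriv W b := hfbar2 b ⟨le_of_lt hbm, hb0⟩
            have habs_b : |fbar b| ≤ M * (b + 1) := by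
              rw [hfb]
              have := lemW' b hb2 (-1) hm1
              rw [hd1, sub_zero] at this
              have h2 : |b - (-1)| = b + 1 := by
                rw [abs_of_nonneg (by linarith)]; ring
              rw [h2] at this
              have h1 : |θ⁻¹ * deriv W b| = θ⁻¹ * |deriv W b| := by
                rw [abs_mul, abs_of_nonneg hθ0]
              rw [h1]
              calc θ⁻¹ * |deriv W b| ≤ θ⁻¹ * (S * (b + 1)) :=
                    mul_le_mul_of_nonneg_left this hθ0
                _ = M * (b + 1) := by rw [← hθS]; ring
            have habm : |a - b| = b - a := by rw [abs_of_nonpos (by linarith)]; ring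
            calc |fbar a - fbar b| ≤ |fbar a| + |fbar b| := abs_sub _ _
              _ ≤ M * (-1 - a) + M * (b + 1) := by linarith
              _ = M * (b - a) := by ring
              _ = M * |a - b| := by rw [habm]
          · -- b in C
            have hfb : fbar b = Θ⁻¹ * deriv W b := hfbar1 b (Or.inl ⟨le_of_lt hb0, hb.2⟩)
            have habs_b : |fbar b| ≤ M * b := by
              rw [hfb]
              have := lemW' b hb2 0 h0
              rw [hd0, sub_zero, sub_zero] at this
              have h2 : |b| = b := abs_of_nonneg (le_of_lt hb0)
              rw [h2] at this
              have h1 : |Θ⁻¹ * deriv W b| = Θ⁻¹ * |deriv W b| := by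
                rw [abs_mul, abs_of_nonneg hΘ0]
              rw [h1]
              calc Θ⁻¹ * |deriv W b| ≤ θ⁻¹ * (S * b) := by
                    nlinarith [abs_nonneg (deriv W b)]
                _ = M * b := by rw [← hθS]; ring
            have habm : |a - b| = b - a := by rw [abs_of_nonpos (by linarith)]; ring
            calc |fbar a - fbar b| ≤ |fbar a| + |fbar b| := abs_sub _ _
              _ ≤ M * (-1 - a) + M * b := by linarith
              _ ≤ M * (b - a) := by nlinarith [hMpos]
              _ = M * |a - b| := by rw [habm]
        · -- a in B
          have hfa : fbar a = θ⁻¹ * deriv W a := hfbar2 a ⟨le_of_lt ham, ha0⟩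
          rcases le_or_gt b 0 with hb0 | hb0
          · -- both in B
            have hfb : fbar b = θ⁻¹ * deriv W b := hfbar2 b ⟨le_of_lt hbm, hb0⟩
            rw [hfa, hfb, ← mul_sub, abs_mul, abs_of_nonneg hθ0]
            calc θ⁻¹ * |deriv W a - deriv W b| ≤ θ⁻¹ * (S * |a - b|) :=
                  mul_le_mul_of_nonneg_left (lemW' a ha2 b hb2) hθ0
              _ = M * |a - b| := by rw [← hθS]; ring
          · -- a in B, b in C
            have hfb : fbar b = Θ⁻¹ * deriv W b := hfbar1 b (Or.inl ⟨le_of_lt hb0, hb.2⟩)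
            have habs_a : |fbar a| ≤ M * (-a) := by
              rw [hfa]
              have := lemW' a ha2 0 h0
              rw [hd0, sub_zero, sub_zero] at this
              have h2 : |a| = -a := abs_of_nonpos ha0
              rw [h2] at this
              have h1 : |θ⁻¹ * deriv W a| = θ⁻¹ * |deriv W a| := by
                rw [abs_mul, abs_of_nonneg hθ0]
              rw [h1]
              calc θ⁻¹ * |deriv W a| ≤ θ⁻¹ * (S * (-a)) :=
                    mul_le_mul_of_nonneg_left this hθ0
                _ = M * (-a) := by rw [← hθS]; ring
            have habs_b : |fbar b| ≤ M * b := by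
              rw [hfb]
              have := lemW' b hb2 0 h0
              rw [hd0, sub_zero, sub_zero] at this
              rw [abs_of_nonneg (le_of_lt hb0)] at this
              have h1 : |Θ⁻¹ * deriv W b| = Θ⁻¹ * |deriv W b| := by
                rw [abs_mul, abs_of_nonneg hΘ0]
              rw [h1]
              calc Θ⁻¹ * |deriv W b| ≤ θ⁻¹ * (S * b) := by
                    nlinarith [abs_nonneg (deriv W b)]
                _ = M * b := by rw [← hθS]; ring
            have habm : |a - b| = b - a := by rw [abs_of_nonpos (by linarith)]; ring
            calc |fbar a - fbar b| ≤ |fbar a| + |fbar b| := abs_sub _ _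
              _ ≤ M * (-a) + M * b := by linarith
              _ = M * (b - a) := by ring
              _ = M * |a - b| := by rw [habm]
      · -- both in C
        have hfa : fbar a = Θ⁻¹ * deriv W a := hfbar1 a (Or.inl ⟨le_of_lt ha0, ha.2⟩)
        have hfb : fbar b = Θ⁻¹ * deriv W b := hfbar1 b (Or.inl ⟨by linarith, hb.2⟩)
        rw [hfa, hfb, ← mul_sub, abs_mul, abs_of_nonneg hΘ0]
        calc Θ⁻¹ * |deriv W a - deriv W b| ≤ θ⁻¹ * (S * |a - b|) := by
              have := lemW' a ha2 b hb2
              nlinarith [abs_nonneg (deriv W a - deriv W b)]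
          _ = M * |a - b| := by rw [← hθS]; ring
    have hfb_lip : |fbar u - fbar v| ≤ M * |u - v| := by
      rcases le_total u v with h | h
      · exact key u hu v hv h
      · rw [abs_sub_comm, abs_sub_comm u v]
        exact key v hv u hu h
    have := hφ_lip u v
    calc |fbar u + φ u - (fbar v + φ v)| = |(fbar u - fbar v) + (φ u - φ v)| := by ring_nf
      _ ≤ |fbar u - fbar v| + |φ u - φ v| := abs_add_le _ _
      _ ≤ M * |u - v| + c * |u - v| := by linarith
      _ = (M + c) * |u - v| := by ring


end
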